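/- Let φ be a pseudo-embedding of a tree T into a network N on the same leaf set, let Γ be a canonical tree extension of N, let ρ_N be the root of N, and assume that the origin of the path φ(a_T), where a_T is the unique arc leaving the root of T, is ρ_N. For a node q of N with q ≠ ρ_N, let T_{φ,Γ,q} denote the subgraph of T induced by all arcs xy of T with φ(y) ≤_Γ q. Then: (a) T_{φ,Γ,q} is a downward-closed subforest of T; (b) the leaf set of T_{φ,Γ,q} equals L(Γ_q); and (c) the top arcs of T_{φ,Γ,q} are exactly those arcs xy of T for which the path φ(xy) contains an arc of GW_q(Γ). -/

import Mathlib

namespace Phylo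

noncomputable section

attribute [local instance] Classical.propDecidable

/-- An arc set over vertex type `V`: a finite directed graph given by its arcs. -/
abbrev ArcSet (V : Type) := Finset (V × V)

section Basic

variable {V : Type} [DecidableEq V]

/-- The nodes of the digraph: all endpoints of arcs. -/
def nodes (A : ArcSet V) : Finset V := A.image Prod.fst ∪ A.image Prod.snd

/-- The arc relation of the digraph. -/
def arcRel (A : ArcSet V) : V → V → Prop := fun u v => (u, v) ∈ A

/-- `Reach A u v`: `v` is reachable from `u` by a directed path, i.e. `v ≤_A u`. -/
def Reach (A : ArcSet V) (u v : V) : Prop := Relation.ReflTransGen (arcRel A) u v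

/-- `SReach A u v`: `v` is reachable from `u` by a directed path of length ≥ 1,
i.e. `v <_A u` (in a DAG). -/
def SReach (A : ArcSet V) (u v : V) : Prop := Relation.TransGen (arcRel A) u v

def indeg (A : ArcSet V) (v : V) : ℕ := (A.filter fun a => a.2 = v).card

def outdeg (A : ArcSet V) (v : V) : ℕ := (A.filter fun a => a.1 = v).card

def inArcs (A : ArcSet V) (v : V) : Finset (V × V) := A.filter fun a => a.2 = v

def outArcs (A : ArcSet V) (v : V) : Finset (V × V) := A.filter fun a => a.1 = v

/-- The leaves: nodes of out-degree zero (identified with their labels). -/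
def leaves (A : ArcSet V) : Finset V := (nodes A).filter fun v => outdeg A v = 0

def Acyclic (A : ArcSet V) : Prop := ∀ v : V, ¬ SReach A v v

/-- A (phylogenetic) network: a finite DAG with a unique in-degree-zero node (the root)
in which every node has in-degree one or out-degree one.  Leaves are identified with
their labels, so a network "on leaf set L" is one with `leaves A = L`. -/
structure IsNetwork (A : ArcSet V) : Prop where
  acyclic : Acyclic A
  unique_root : ∃! r : V, r ∈ nodes A ∧ indeg A r = 0
  degree_cond : ∀ v ∈ nodes A, indeg A v = 1 ∨ outdeg A v = 1

/-- A (phylogenetic) tree: a network with no node of in-degree at least two. -/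
def IsPhyloTree (A : ArcSet V) : Prop := IsNetwork A ∧ ∀ v ∈ nodes A, indeg A v ≤ 1

/-- The descendant order extended to arcs: `a ≤_A b` iff `a = b` or the tail of `a`
is reachable from the head of `b`. -/
def ArcLE (A : ArcSet V) (a b : V × V) : Prop := a = b ∨ Reach A b.2 a.1

/-- Strict version of `ArcLE`. -/
def ArcLT (A : ArcSet V) (a b : V × V) : Prop := ArcLE A a b ∧ a ≠ b

/-- The (arc set of the) forest `T_S` below the arc set `S`. -/
def below (A : ArcSet V) (S : Finset (V × V)) : Finset (V × V) :=
  A.filter fun a => ∃ s ∈ S, ArcLE A a s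

/-- `F` is a downward-closed subforest of the tree with arc set `AT`. -/
def IsDCSubforest (AT : ArcSet V) (F : Finset (V × V)) : Prop :=
  ∃ S : Finset (V × V), S ⊆ AT ∧ S.Nonempty ∧ F = below AT S

/-- The top-arc set of `F`: the maximal arcs of `F` with respect to `ArcLE`. -/
def topArcs (A : ArcSet V) (F : Finset (V × V)) : Finset (V × V) :=
  F.filter fun a => ∀ b ∈ F, ArcLE A a b → a = b

/-- `S` is an antichain of arcs with respect to the strict order `ArcLT`. -/
def ArcAntichain (A : ArcSet V) (S : Finset (V × V)) : Prop :=
  ∀ a ∈ S, ∀ b ∈ S, ¬ ArcLT A a b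

/-- The leaves of `T` lying below some arc of `F` (the leaf set of a
downward-closed subforest with arc set `F`, and of `T_F`). -/
def forestLeaves (AT : ArcSet V) (F : Finset (V × V)) : Finset V :=
  (leaves AT).filter fun l => ∃ a ∈ F, Reach AT a.2 l

/-- `L(T_y)`: leaves of `T` below the node `y`. -/
def leavesBelow (AT : ArcSet V) (y : V) : Finset V :=
  (leaves AT).filter fun l => Reach AT y l

/-- A directed path of length ≥ 1, given by its list of vertices. -/
def IsDipath (A : ArcSet V) (p : List V) : Prop :=
  2 ≤ p.length ∧ p.Chain' (arcRel A)

/-- The arcs of a path given by its vertex list. -/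
def pathArcs (p : List V) : List (V × V) := p.zip p.tail

/-- The path `p` begins with the arc `e`. -/
def startsWith (p : List V) (e : V × V) : Prop := (pathArcs p).head? = some e

/-- The origin of the path `p` is `v`. -/
def originIs (p : List V) (v : V) : Prop := p.head? = some v

/-- A pseudo-embedding of the (downward-closed sub)forest with arc set `F` of the tree
`AT` into the network `AN`: each arc of `F` is mapped to a directed path of length ≥ 1
in `AN` such that (a) consecutive arcs yield composable paths, (b) distinct arcs yield
arc-disjoint paths, and (c) an arc into a leaf `l` of `T` is mapped to a path ending
at the equally-labelled leaf `l` of `N`. -/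
structure IsPseudoEmbedding (AT AN : ArcSet V) (F : Finset (V × V))
    (phi : V × V → List V) : Prop where
  isPath : ∀ a ∈ F, IsDipath AN (phi a)
  comp : ∀ x y z : V, (x, y) ∈ F → (y, z) ∈ F →
    (phi (x, y)).getLast? = (phi (y, z)).head?
  disjoint : ∀ a ∈ F, ∀ b ∈ F, a ≠ b → ∀ e ∈ pathArcs (phi a), e ∉ pathArcs (phi b)
  leaf : ∀ x l : V, (x, l) ∈ F → l ∈ leaves AT → (phi (x, l)).getLast? = some l

/-- A rooted tree (as a digraph): acyclic, every node has in-degree at most one,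
and there is a root from which every node is reachable. -/
def IsRootedTree (A : ArcSet V) : Prop :=
  Acyclic A ∧ (∀ v ∈ nodes A, indeg A v ≤ 1) ∧
    ∃ r ∈ nodes A, indeg A r = 0 ∧ ∀ v ∈ nodes A, Reach A r v

/-- `AΓ` is a tree extension of the DAG `AN`: a rooted tree on the same node set
whose descendant order contains that of `AN`. -/
def IsTreeExtension (AN AG : ArcSet V) : Prop :=
  IsRootedTree AG ∧ nodes AG = nodes AN ∧ ∀ u v : V, SReach AN u v → SReach AG u v

/-- The node set of the subtree `Γ_v` of `Γ` rooted at `v`. -/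
def gammaSub (AG : ArcSet V) (v : V) : Finset V := (nodes AG).filter fun u => Reach AG v u

/-- `L(Γ_v)`: the leaves of `Γ` in the subtree rooted at `v`. -/
def gammaLeaves (AG : ArcSet V) (v : V) : Finset V := (leaves AG).filter fun u => Reach AG v u

/-- Weak connectivity of the subgraph of `A` induced by the vertex set `Sv`. -/
def WeaklyConnectedOn (A : ArcSet V) (Sv : Finset V) : Prop :=
  ∀ u ∈ Sv, ∀ w ∈ Sv,
    Relation.ReflTransGen (fun x y => x ∈ Sv ∧ y ∈ Sv ∧ ((x, y) ∈ A ∨ (y, x) ∈ A)) u w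

/-- A canonical tree extension: a tree extension such that every subtree induces a
weakly connected subgraph of the underlying DAG. -/
def IsCanonicalTreeExtension (AN AG : ArcSet V) : Prop :=
  IsTreeExtension AN AG ∧ ∀ v ∈ nodes AG, WeaklyConnectedOn AN (gammaSub AG v)

/-- `GW_v(Γ)`: the arcs `xy` of the DAG with `x` strictly above `v` in `Γ` and
`y` below or equal to `v` in `Γ`. -/
def GW (AN AG : ArcSet V) (v : V) : Finset (V × V) :=
  AN.filter fun a => SReach AG a.1 v ∧ Reach AG v a.2

/-- The part of the `v`-split of `Y` belonging to the child `q`. -/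
def splitPart (AT AG : ArcSet V) (q : V) (Y : Finset (V × V)) : Finset (V × V) :=
  Y.filter fun a => leavesBelow AT a.2 ⊆ gammaLeaves AG q

/-- `ψ` is a valid map on the arc set `S`: injective, and every arc `xy ∈ S` is
mapped to an arc `wz` with `L(T_y) ⊆ L(Γ_z)`. -/
def ValidMap (AT AG : ArcSet V) (S : Finset (V × V)) (psi : V × V → V × V) : Prop :=
  Set.InjOn psi ↑S ∧ ∀ a ∈ S, leavesBelow AT a.2 ⊆ gammaLeaves AG (psi a).2

/-- `S` is a top-arc set for the leaf set `L'`: an antichain of arcs of `T` such that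
the leaf set of `T_S` equals `L'`. -/
def IsTopArcSetFor (AT : ArcSet V) (S : Finset (V × V)) (L' : Finset V) : Prop :=
  S ⊆ AT ∧ ArcAntichain AT S ∧ forestLeaves AT S = L'

/-- Contraction of the arc `uv`: remove `v` and the arc `uv`, and redirect every other
arc incident with `v` to `u` instead. -/
def contractArc (A : ArcSet V) (u v : V) : ArcSet V :=
  (A.erase (u, v)).image fun a => (if a.1 = v then u else a.1, if a.2 = v then u else a.2)

/-- `p` is a directed path from `x` to `y` in `A`. -/
def IsPathFrom (A : ArcSet V) (p : List V) (x y : V) : Prop :=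
  p.head? = some x ∧ p.getLast? = some y ∧ p.Chain' (arcRel A)

/-- The family of demands `D` is satisfied in `A`: there are pairwise arc-disjoint
directed paths, one from `x` to `y` for each demand `(x, y) ∈ D`. -/
def SatisfiesDemands (A : ArcSet V) (D : Finset (V × V)) : Prop :=
  ∃ p : V × V → List V,
    (∀ d ∈ D, IsPathFrom A (p d) d.1 d.2) ∧
      ∀ d ∈ D, ∀ d' ∈ D, d ≠ d' → ∀ e ∈ pathArcs (p d), e ∉ pathArcs (p d')

/-- One subdivision step: replace an arc `xy` by the two arcs `xw`, `wy` for a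
fresh vertex `w`. -/
def SubdivStep {W : Type} [DecidableEq W] (A A' : Finset (W × W)) : Prop :=
  ∃ x y w : W, (x, y) ∈ A ∧ w ∉ nodes A ∧
    A' = insert (x, w) (insert (w, y) (A.erase (x, y)))

/-- `AN` displays `AT`: some DAG obtained from `AT` by repeatedly subdividing arcs
(with fresh vertices drawn from `V ⊕ ℕ`) admits a leaf-respecting isomorphism onto a
subgraph of `AN`. -/
def Displays (AN AT : ArcSet V) : Prop :=
  ∃ (A' : Finset ((V ⊕ ℕ) × (V ⊕ ℕ))) (iota : V ⊕ ℕ → V),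
    Relation.ReflTransGen SubdivStep
      (AT.image fun a => ((Sum.inl a.1 : V ⊕ ℕ), (Sum.inl a.2 : V ⊕ ℕ))) A' ∧
    Set.InjOn iota ↑(nodes A') ∧
    (∀ a ∈ A', (iota a.1, iota a.2) ∈ AN) ∧
    ∀ l ∈ leaves AT, iota (Sum.inl l) = l

end Basic

section Ordered

variable {V : Type} [LinearOrder V]

/-- The list of children of `v` in `Γ`, in increasing order; the `j`-th child `q_j`
is the entry at index `j - 1`. -/
def childrenList (A : ArcSet V) (v : V) : List V :=
  ((A.filter fun a => a.1 = v).image Prod.snd).sort (· ≤ ·)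

/-- `Y` is `v`-splittable: every arc of `Y` belongs to the part of the `v`-split
corresponding to some child of `v` in `Γ`. -/
def VSplittable (AT AG : ArcSet V) (v : V) (Y : Finset (V × V)) : Prop :=
  ∀ a ∈ Y, ∃ q ∈ childrenList AG v, a ∈ splitPart AT AG q Y

/-- `⋃_{i ≤ j} Y_i`: the arcs of `Y` in the split parts of the first `j` children
of `v` in `Γ`. -/
def unionUpTo (AT AG : ArcSet V) (v : V) (j : ℕ) (Y : Finset (V × V)) : Finset (V × V) :=
  Y.filter fun a => ∃ q ∈ (childrenList AG v).take j, leavesBelow AT a.2 ⊆ gammaLeaves AG q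

/-- `(v, S, ψ, j)` is a signature. -/
def IsSignature (AN AG AT : ArcSet V) (v : V) (S : Finset (V × V))
    (psi : V × V → V × V) (j : ℕ) : Prop :=
  v ∈ nodes AN ∧ j ≤ (childrenList AG v).length ∧
    IsTopArcSetFor AT S (gammaLeaves AG v) ∧
    (∀ a ∈ S, psi a ∈ GW AN AG v) ∧ ValidMap AT AG S psi

/-- The dynamic-programming predicate `χ[v, S, ψ, j]`. -/
def Chi (AN AG AT : ArcSet V) (v : V) (S : Finset (V × V))
    (psi : V × V → V × V) (j : ℕ) : Prop :=
  -- case (a)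
  (j = 0 ∧ (VSplittable AT AG v S ∨
    ∃ a ∈ S, psi a ∈ inArcs AN v ∧ VSplittable AT AG v (S.erase a))) ∨
  -- case (b)
  (0 < j ∧ VSplittable AT AG v S ∧
    ∃ phi : V × V → List V,
      IsPseudoEmbedding AT AN (below AT (unionUpTo AT AG v j S)) phi ∧
        ∀ a ∈ unionUpTo AT AG v j S, startsWith (phi a) (psi a)) ∨
  -- case (c)
  (0 < j ∧ ∃ a ∈ S, psi a ∈ inArcs AN v ∧ VSplittable AT AG v (S.erase a) ∧
    (outArcs AT a.2).Nonempty ∧ VSplittable AT AG v (outArcs AT a.2) ∧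
    ∃ phi : V × V → List V,
      IsPseudoEmbedding AT AN
        (below AT (unionUpTo AT AG v j (S.erase a) ∪ unionUpTo AT AG v j (outArcs AT a.2)))
        phi ∧
      (∀ b ∈ unionUpTo AT AG v j (S.erase a), startsWith (phi b) (psi b)) ∧
      ∀ b ∈ unionUpTo AT AG v j (outArcs AT a.2), originIs (phi b) v)

end Ordered

end

end Phylo

open Phylo

attribute [local instance] Classical.propDecidable

namespace Stmt15Aux

open Phylo Relation

attribute [local instance] Classical.propDecidable

set_option linter.unusedSectionVars false

variable {V : Type} [DecidableEq V]

lemma pathArcs_cons_cons (a b : V) (t : List V) :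
    pathArcs (a :: b :: t) = (a, b) :: pathArcs (b :: t) := rfl

lemma mem_pathArcs_rel {r : V → V → Prop} :
    ∀ {p : List V} {e : V × V}, p.Chain' r → e ∈ pathArcs p → r e.1 e.2
  | [], e, _, he => by simp [pathArcs] at he
  | [a], e, _, he => by simp [pathArcs] at he
  | a :: b :: t, e, hc, he => by
    simp only [List.Chain', List.isChain_cons_cons] at hc
    rw [pathArcs_cons_cons, List.mem_cons] at he
    rcases he with rfl | he
    · exact hc.1
    · exact mem_pathArcs_rel hc.2 he

lemma chain'_head_getLast {r : V → V → Prop} :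
    ∀ {p : List V} {h g : V}, p.Chain' r → p.head? = some h → p.getLast? = some g →
      Relation.ReflTransGen r h g
  | [], h, g, _, hh, _ => by simp at hh
  | [a], h, g, _, hh, hg => by
    simp at hh hg; subst hh; subst hg; exact Relation.ReflTransGen.refl
  | a :: b :: t, h, g, hc, hh, hg => by
    simp only [List.Chain', List.isChain_cons_cons] at hc
    simp only [List.head?_cons, Option.some.injEq] at hh
    subst hh
    rw [List.getLast?_cons_cons] at hg
    exact Relation.ReflTransGen.head hc.1 (chain'_head_getLast hc.2 rfl hg)

lemma pathArcs_reach_head {r : V → V → Prop} :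
    ∀ {p : List V} {e : V × V} {h : V}, p.Chain' r → e ∈ pathArcs p →
      p.head? = some h → Relation.ReflTransGen r h e.1
  | [], e, h, _, he, _ => by simp [pathArcs] at he
  | [a], e, h, _, he, _ => by simp [pathArcs] at he
  | a :: b :: t, e, h, hc, he, hh => by
    simp only [List.Chain', List.isChain_cons_cons] at hc
    simp only [List.head?_cons, Option.some.injEq] at hh
    subst hh
    rw [pathArcs_cons_cons, List.mem_cons] at he
    rcases he with rfl | he
    · exact Relation.ReflTransGen.refl
    · exact Relation.ReflTransGen.head hc.1 (pathArcs_reach_head hc.2 he rfl)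

lemma pathArcs_reach_last {r : V → V → Prop} :
    ∀ {p : List V} {e : V × V} {g : V}, p.Chain' r → e ∈ pathArcs p →
      p.getLast? = some g → Relation.ReflTransGen r e.2 g
  | [], e, g, _, he, _ => by simp [pathArcs] at he
  | [a], e, g, _, he, _ => by simp [pathArcs] at he
  | a :: b :: t, e, g, hc, he, hg => by
    simp only [List.Chain', List.isChain_cons_cons] at hc
    rw [List.getLast?_cons_cons] at hg
    rw [pathArcs_cons_cons, List.mem_cons] at he
    rcases he with rfl | he
    · exact chain'_head_getLast hc.2 rfl hg
    · exact pathArcs_reach_last hc.2 he hg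

lemma crossing {r : V → V → Prop} {P : V → Prop} :
    ∀ {p : List V} {h g : V}, p.Chain' r → p.head? = some h → p.getLast? = some g →
      ¬ P h → P g → ∃ e ∈ pathArcs p, ¬ P e.1 ∧ P e.2
  | [], h, g, _, hh, _, _, _ => by simp at hh
  | [a], h, g, _, hh, hg, hPh, hPg => by
    simp at hh hg; subst hh; subst hg; exact absurd hPg hPh
  | a :: b :: t, h, g, hc, hh, hg, hPh, hPg => by
    simp only [List.Chain', List.isChain_cons_cons] at hc
    obtain rfl : h = a := (by simpa using hh : a = h).symm
    rw [List.getLast?_cons_cons] at hg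
    by_cases hPb : P b
    · exact ⟨(h, b), by rw [pathArcs_cons_cons]; exact List.mem_cons_self, hPh, hPb⟩
    · obtain ⟨e, he, h1, h2⟩ := crossing hc.2 rfl hg hPb hPg
      exact ⟨e, by rw [pathArcs_cons_cons]; exact List.mem_cons_of_mem _ he, h1, h2⟩

lemma mem_nodes_fst {A : ArcSet V} {u v : V} (h : (u, v) ∈ A) : u ∈ nodes A := by
  unfold nodes
  exact Finset.mem_union_left _ (Finset.mem_image.mpr ⟨(u, v), h, rfl⟩)

lemma mem_nodes_snd {A : ArcSet V} {u v : V} (h : (u, v) ∈ A) : v ∈ nodes A := by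
  unfold nodes
  exact Finset.mem_union_right _ (Finset.mem_image.mpr ⟨(u, v), h, rfl⟩)

lemma reach_lift {A B : ArcSet V} (hAB : ∀ u v : V, (u, v) ∈ A → Reach B u v)
    {u v : V} (h : Reach A u v) : Reach B u v := by
  induction h with
  | refl => exact Relation.ReflTransGen.refl
  | tail hbc hcd ih => exact ih.trans (hAB _ _ hcd)

lemma transGen_of_ne {r : V → V → Prop} {a b : V}
    (h : Relation.ReflTransGen r a b) (hne : a ≠ b) : Relation.TransGen r a b := by
  rcases Relation.ReflTransGen.cases_head h with rfl | ⟨c, hac, hcb⟩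
  · exact absurd rfl hne
  · exact Relation.TransGen.head' hac hcb

lemma transGen_last_arc {r : V → V → Prop} {a b : V}
    (h : Relation.TransGen r a b) : ∃ c, r c b := by
  induction h with
  | single h => exact ⟨_, h⟩
  | tail _ h _ => exact ⟨_, h⟩

lemma indeg_zero_no_arc {A : ArcSet V} {v : V} (h : indeg A v = 0) (u : V) :
    (u, v) ∉ A := by
  intro hm
  have h1 : (u, v) ∈ A.filter fun a => a.2 = v := Finset.mem_filter.mpr ⟨hm, rfl⟩
  have h2 := Finset.card_pos.mpr ⟨_, h1⟩
  have h3 : (A.filter fun a => a.2 = v).card = 0 := h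
  omega

lemma unique_in_arc {A : ArcSet V} {u w v : V} (hdeg : indeg A v ≤ 1)
    (h1 : (u, v) ∈ A) (h2 : (w, v) ∈ A) : u = w := by
  have hu : (u, v) ∈ A.filter fun a => a.2 = v := Finset.mem_filter.mpr ⟨h1, rfl⟩
  have hw : (w, v) ∈ A.filter fun a => a.2 = v := Finset.mem_filter.mpr ⟨h2, rfl⟩
  have := Finset.card_le_one.mp hdeg _ hu _ hw
  exact congrArg Prod.fst this

/-- Two ancestors of a node in a tree are comparable. -/
lemma tree_comparable {AG : ArcSet V} (hdeg : ∀ v ∈ nodes AG, indeg AG v ≤ 1)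
    {u q z : V} (h1 : Reach AG u z) (h2 : Reach AG q z) :
    Reach AG u q ∨ Reach AG q u := by
  induction h1 using Relation.ReflTransGen.head_induction_on with
  | refl => exact Or.inr h2
  | head hac hcz ih =>
    rename_i a c
    rcases ih with h | h
    · exact Or.inl (Relation.ReflTransGen.head hac h)
    · rcases Relation.ReflTransGen.cases_tail h with rfl | ⟨w, hqw, hwc⟩
      · exact Or.inl (Relation.ReflTransGen.single hac)
      · have : w = a := unique_in_arc (hdeg c (mem_nodes_snd hac)) hwc hac
        subst this
        exact Or.inr hqw

/-- In a finite acyclic digraph every node reaches a node of out-degree zero. -/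
lemma exists_leaf_below_aux (AG : ArcSet V) (hac : Acyclic AG) :
    ∀ (n : ℕ) (q : V), ((nodes AG).filter fun w => SReach AG q w).card ≤ n →
      q ∈ nodes AG → ∃ l ∈ leaves AG, Reach AG q l := by
  intro n
  induction n with
  | zero =>
    intro q hcard hq
    by_cases h0 : outdeg AG q = 0
    · exact ⟨q, Finset.mem_filter.mpr ⟨hq, h0⟩, Relation.ReflTransGen.refl⟩
    · exfalso
      have hne : (AG.filter fun a => a.1 = q).Nonempty := by
        rw [← Finset.card_pos]
        unfold outdeg at h0
        omega
      obtain ⟨⟨x, w⟩, hm⟩ := hne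
      rw [Finset.mem_filter] at hm
      have hxq : x = q := hm.2
      subst hxq
      have hw : w ∈ (nodes AG).filter fun w => SReach AG x w :=
        Finset.mem_filter.mpr ⟨mem_nodes_snd hm.1, Relation.TransGen.single hm.1⟩
      have := Finset.card_pos.mpr ⟨_, hw⟩
      omega
  | succ n ih =>
    intro q hcard hq
    by_cases h0 : outdeg AG q = 0
    · exact ⟨q, Finset.mem_filter.mpr ⟨hq, h0⟩, Relation.ReflTransGen.refl⟩
    · have hne : (AG.filter fun a => a.1 = q).Nonempty := by
        rw [← Finset.card_pos]
        unfold outdeg at h0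
        omega
      obtain ⟨⟨x, w⟩, hm⟩ := hne
      rw [Finset.mem_filter] at hm
      have hxq : x = q := hm.2
      subst hxq
      have harc : (x, w) ∈ AG := hm.1
      have hwD : w ∈ (nodes AG).filter fun u => SReach AG x u :=
        Finset.mem_filter.mpr ⟨mem_nodes_snd harc, Relation.TransGen.single harc⟩
      have hsub : ((nodes AG).filter fun u => SReach AG w u) ⊆
          ((nodes AG).filter fun u => SReach AG x u).erase w := by
        intro y hy
        rw [Finset.mem_filter] at hy
        refine Finset.mem_erase.mpr ⟨?_, Finset.mem_filter.mpr
          ⟨hy.1, Relation.TransGen.head harc hy.2⟩⟩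
        rintro rfl
        exact hac y hy.2
      have hle : ((nodes AG).filter fun u => SReach AG w u).card ≤ n := by
        have h1 := Finset.card_le_card hsub
        have h2 := Finset.card_erase_of_mem hwD
        omega
      obtain ⟨l, hl, hreach⟩ := ih w hle (mem_nodes_snd harc)
      exact ⟨l, hl, Relation.ReflTransGen.head harc hreach⟩

lemma exists_leaf_below {AG : ArcSet V} (hac : Acyclic AG) {q : V}
    (hq : q ∈ nodes AG) : ∃ l ∈ leaves AG, Reach AG q l :=
  exists_leaf_below_aux AG hac _ q le_rfl hq

lemma outdeg_zero_no_arc {A : ArcSet V} {v : V} (h : outdeg A v = 0) (u : V) :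
    (v, u) ∉ A := by
  intro hm
  have h1 : (v, u) ∈ A.filter fun a => a.1 = v := Finset.mem_filter.mpr ⟨hm, rfl⟩
  have h2 := Finset.card_pos.mpr ⟨_, h1⟩
  have h3 : (A.filter fun a => a.1 = v).card = 0 := h
  omega

lemma indeg_ne_zero_arc {A : ArcSet V} {v : V} (h : indeg A v ≠ 0) :
    ∃ w, (w, v) ∈ A := by
  have h3 : (A.filter fun a => a.2 = v).card ≠ 0 := h
  obtain ⟨⟨w, v'⟩, hm⟩ := Finset.card_ne_zero.mp h3
  rw [Finset.mem_filter] at hm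
  have : v' = v := hm.2
  subst this
  exact ⟨w, hm.1⟩

lemma outdeg_ne_zero_arc {A : ArcSet V} {v : V} (h : outdeg A v ≠ 0) :
    ∃ w, (v, w) ∈ A := by
  have h3 : (A.filter fun a => a.1 = v).card ≠ 0 := h
  obtain ⟨⟨v', w⟩, hm⟩ := Finset.card_ne_zero.mp h3
  rw [Finset.mem_filter] at hm
  have : v' = v := hm.2
  subst this
  exact ⟨w, hm.1⟩

lemma unique_out_arc {A : ArcSet V} {v u w : V} (hdeg : outdeg A v ≤ 1)
    (h1 : (v, u) ∈ A) (h2 : (v, w) ∈ A) : u = w := by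
  have hu : (v, u) ∈ A.filter fun a => a.1 = v := Finset.mem_filter.mpr ⟨h1, rfl⟩
  have hw : (v, w) ∈ A.filter fun a => a.1 = v := Finset.mem_filter.mpr ⟨h2, rfl⟩
  have := Finset.card_le_one.mp hdeg _ hu _ hw
  exact congrArg Prod.snd this

lemma transGen_first_arc {r : V → V → Prop} {a b : V}
    (h : Relation.TransGen r a b) : ∃ c, r a c := by
  induction h with
  | single h => exact ⟨_, h⟩
  | tail _ _ ih => exact ih

lemma exists_head?_getLast? {p : List V} (hne : p ≠ []) :
    ∃ h g, p.head? = some h ∧ p.getLast? = some g := by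
  cases p with
  | nil => exact absurd rfl hne
  | cons a t =>
    exact ⟨a, (a :: t).getLast (by simp), rfl, List.getLast?_eq_getLast (by simp)⟩

end Stmt15Aux

/-- for a pseudo-embedding `φ` of a tree `T` into a network `N` with
canonical tree extension `Γ`, whose path for the root arc of `T` starts at the root
`ρ_N` of `N`, and any node `q ≠ ρ_N` of `N`, the subgraph `T_{φ,Γ,q}` of `T` induced
by the arcs `xy` with `φ(y) ≤_Γ q` satisfies: (a) it is a downward-closed subforest of
`T`; (b) its leaf set is `L(Γ_q)`; (c) its top arcs are exactly the arcs `xy` of `T`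
whose path `φ(xy)` contains an arc of `GW_q(Γ)`. -/
theorem stmt15 {V : Type} [DecidableEq V] (AN AG AT : ArcSet V)
    (phi : V × V → List V) (rootN rootT t0 q : V)
    (hN : IsNetwork AN) (hG : IsCanonicalTreeExtension AN AG)
    (hT : IsPhyloTree AT) (hleaf : leaves AN = leaves AT)
    (hphi : IsPseudoEmbedding AT AN AT phi)
    (hrootN : rootN ∈ nodes AN) (hrootNdeg : indeg AN rootN = 0)
    (hrootT : (rootT, t0) ∈ AT) (hrootTdeg : indeg AT rootT = 0)
    (horigin : (phi (rootT, t0)).head? = some rootN)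
    (hq : q ∈ nodes AN) (hqne : q ≠ rootN) :
    IsDCSubforest AT
      (AT.filter fun a => ∃ z : V, (phi a).getLast? = some z ∧ Reach AG q z) ∧
    forestLeaves AT
      (AT.filter fun a => ∃ z : V, (phi a).getLast? = some z ∧ Reach AG q z) =
        gammaLeaves AG q ∧
    topArcs AT
      (AT.filter fun a => ∃ z : V, (phi a).getLast? = some z ∧ Reach AG q z) =
        AT.filter fun a => ∃ e ∈ pathArcs (phi a), e ∈ GW AN AG q := by
  classical
  obtain ⟨⟨hGtree, hGnodes, hGmono⟩, hGcanon⟩ := hG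
  obtain ⟨hGacyc, hGdeg, r, hrNodes, hrdeg, hrall⟩ := hGtree
  have hATacyc : Acyclic AT := hT.1.acyclic
  have hATdeg : ∀ v ∈ nodes AT, indeg AT v ≤ 1 := hT.2
  set F := AT.filter fun a => ∃ z : V, (phi a).getLast? = some z ∧ Reach AG q z
    with hFdef
  -- basic reach transfer
  have reachNG : ∀ u v : V, Reach AN u v → Reach AG u v := fun u v h =>
    Stmt15Aux.reach_lift
      (fun a b hab => (hGmono a b (Relation.TransGen.single hab)).to_reflTransGen) h
  have hqG : q ∈ nodes AG := hGnodes ▸ hq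
  -- paths are nonempty
  have hpne : ∀ a ∈ AT, phi a ≠ [] := by
    intro a ha h
    have := (hphi.isPath a ha).1
    rw [h] at this
    simp at this
  -- single closure step
  have F_step : ∀ x y c : V, (x, y) ∈ F → (y, c) ∈ AT → (y, c) ∈ F := by
    intro x y c hxy hyc
    rw [hFdef, Finset.mem_filter] at hxy ⊢
    obtain ⟨hxyT, w, hw, hqw⟩ := hxy
    have hcomp := hphi.comp x y c hxyT hyc
    obtain ⟨h, g, hh, hg⟩ := Stmt15Aux.exists_head?_getLast? (hpne _ hyc)
    have hhw : (phi (y, c)).head? = some w := by rw [← hcomp]; exact hw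
    have hreach : Reach AN w g :=
      Stmt15Aux.chain'_head_getLast (hphi.isPath _ hyc).2 hhw hg
    exact ⟨hyc, g, hg, hqw.trans (reachNG _ _ hreach)⟩
  -- full downward closure
  have F_closed : ∀ a ∈ F, ∀ c : V, Reach AT a.2 c → ∀ c' : V, (c, c') ∈ AT →
      (c, c') ∈ F := by
    intro a ha c hreach
    induction hreach with
    | refl => intro c' h; exact F_step a.1 a.2 c' ha h
    | tail h1 h2 ih =>
      intro c' h
      exact F_step _ _ _ (ih _ h2) h
  -- leaves of Γ are leaves of N (easy direction)
  have hleavesGN : leaves AG ⊆ leaves AN := by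
    intro v hv
    rw [leaves, Finset.mem_filter] at hv ⊢
    refine ⟨hGnodes ▸ hv.1, ?_⟩
    by_contra h0
    obtain ⟨w, hw⟩ := Stmt15Aux.outdeg_ne_zero_arc h0
    obtain ⟨c, hc⟩ := Stmt15Aux.transGen_first_arc (hGmono v w (Relation.TransGen.single hw))
    exact Stmt15Aux.outdeg_zero_no_arc hv.2 c hc
  -- leaves of N are leaves of Γ (via canonicity)
  have hleavesNG : leaves AN ⊆ leaves AG := by
    intro v hv
    rw [leaves, Finset.mem_filter] at hv ⊢
    have hvG : v ∈ nodes AG := hGnodes.symm ▸ hv.1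
    refine ⟨hvG, ?_⟩
    by_contra h0
    obtain ⟨c, hc⟩ := Stmt15Aux.outdeg_ne_zero_arc h0
    have hcSub : c ∈ gammaSub AG v :=
      Finset.mem_filter.mpr ⟨Stmt15Aux.mem_nodes_snd hc, Relation.ReflTransGen.single hc⟩
    have hvSub : v ∈ gammaSub AG v :=
      Finset.mem_filter.mpr ⟨hvG, Relation.ReflTransGen.refl⟩
    have hconn := hGcanon v hvG v hvSub c hcSub
    have hvc : v ≠ c := by
      rintro rfl
      exact hGacyc v (Relation.TransGen.single hc)
    rcases Relation.ReflTransGen.cases_head hconn with heq | ⟨y, ⟨_, hySub, hOr⟩, _⟩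
    · exact hvc heq
    · rcases hOr with hvy | hyv
      · exact Stmt15Aux.outdeg_zero_no_arc hv.2 y hvy
      · have h1 := hGmono y v (Relation.TransGen.single hyv)
        have h2 : Reach AG v y := (Finset.mem_filter.mp hySub).2
        exact hGacyc y (Relation.TransGen.trans_left h1 h2)
  -- every leaf of T has an in-arc
  have hInArc : ∀ l' ∈ leaves AT, ∃ w, (w, l') ∈ AT := by
    intro l' hl'
    rw [leaves, Finset.mem_filter] at hl'
    refine Stmt15Aux.indeg_ne_zero_arc ?_
    intro h0
    obtain ⟨r0, _, hru⟩ := hT.1.unique_root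
    have h1 : l' = r0 := hru l' ⟨hl'.1, h0⟩
    have h2 : rootT = r0 := hru rootT ⟨Stmt15Aux.mem_nodes_fst hrootT, hrootTdeg⟩
    have h3 : l' = rootT := h1.trans h2.symm
    subst h3
    exact Stmt15Aux.outdeg_zero_no_arc hl'.2 t0 hrootT
  -- leaves below q give arcs in F
  have hLeafArcF : ∀ l' : V, l' ∈ leaves AT → Reach AG q l' → ∃ w, (w, l') ∈ F := by
    intro l' hl' hql'
    obtain ⟨w, hw⟩ := hInArc l' hl'
    have hlast := hphi.leaf w l' hw hl'
    exact ⟨w, Finset.mem_filter.mpr ⟨hw, l', hlast, hql'⟩⟩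
  -- arcs in F into leaves certify the leaf is below q in Γ
  have hqReach : ∀ w l' : V, (w, l') ∈ F → l' ∈ leaves AT → Reach AG q l' := by
    intro w l' hwF hl'
    rw [hFdef, Finset.mem_filter] at hwF
    obtain ⟨hwT, z, hz, hqz⟩ := hwF
    have hlast := hphi.leaf w l' hwT hl'
    rw [hlast] at hz
    injection hz with hz
    rwa [hz]
  -- F is nonempty
  obtain ⟨l, hlG, hql⟩ := Stmt15Aux.exists_leaf_below hGacyc hqG
  have hlT : l ∈ leaves AT := hleaf ▸ hleavesGN hlG
  obtain ⟨w0, hw0F⟩ := hLeafArcF l hlT hql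
  have hFne : F.Nonempty := ⟨_, hw0F⟩
  -- F = below AT F
  have hFbelow : F = below AT F := by
    ext a
    constructor
    · intro ha
      exact Finset.mem_filter.mpr ⟨(Finset.mem_filter.mp ha).1, a, ha, Or.inl rfl⟩
    · intro ha
      rw [below, Finset.mem_filter] at ha
      obtain ⟨haT, s, hs, hle⟩ := ha
      rcases hle with rfl | hreach
      · exact hs
      · exact F_closed s hs a.1 hreach a.2 haT
  -- root of Γ is the root of N
  have hrEqN : r = rootN := by
    by_contra hne
    have hrN : r ∈ nodes AN := hGnodes ▸ hrNodes
    have hne0 : indeg AN r ≠ 0 := by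
      intro h0
      obtain ⟨r0, _, hru⟩ := hN.unique_root
      exact hne ((hru r ⟨hrN, h0⟩).trans (hru rootN ⟨hrootN, hrootNdeg⟩).symm)
    obtain ⟨w, hw⟩ := Stmt15Aux.indeg_ne_zero_arc hne0
    obtain ⟨c, hc⟩ := Stmt15Aux.transGen_last_arc (hGmono w r (Relation.TransGen.single hw))
    exact Stmt15Aux.indeg_zero_no_arc hrdeg c hc
  have hqNotAboveRoot : ¬ Reach AG q rootN := by
    intro h
    have h2 : Reach AG rootN q := hrEqN ▸ hrall q hqG
    exact hGacyc q (Relation.TransGen.trans_left (Stmt15Aux.transGen_of_ne h hqne) h2)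
  -- phi transports reachability in T to reachability in N
  have phi_reach : ∀ x y : V, (x, y) ∈ AT → ∀ v0 : V, (phi (x, y)).head? = some v0 →
      ∀ c : V, Reach AT c x → ∀ w zc : V, (w, c) ∈ AT →
        (phi (w, c)).getLast? = some zc → Reach AN zc v0 := by
    intro x y hxyT v0 hv0 c hcx
    induction hcx using Relation.ReflTransGen.head_induction_on with
    | refl =>
      intro w zc hw hzc
      have hcomp := hphi.comp w x y hw hxyT
      rw [hzc, hv0] at hcomp
      injection hcomp with h
      rw [h]
      exact Relation.ReflTransGen.refl
    | @head cc cc' hstep hrest ih =>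
      intro w zc hw hzc
      have hcomp := hphi.comp w cc cc' hw hstep
      rw [hzc] at hcomp
      obtain ⟨h', g', hh', hg'⟩ := Stmt15Aux.exists_head?_getLast? (hpne _ hstep)
      have hzch : (phi (cc, cc')).head? = some zc := hcomp.symm
      have h1 : Reach AN zc g' :=
        Stmt15Aux.chain'_head_getLast (hphi.isPath _ hstep).2 hzch hg'
      exact h1.trans (ih cc g' hstep hg')
  refine ⟨⟨F, Finset.filter_subset _ _, hFne, hFbelow⟩, ?_, ?_⟩
  -- part (b)
  · ext l'
    rw [forestLeaves, gammaLeaves, Finset.mem_filter, Finset.mem_filter]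
    constructor
    · rintro ⟨hl'T, a, haF, hreach⟩
      have hql' : Reach AG q l' := by
        rcases Relation.ReflTransGen.cases_tail hreach with heq | ⟨w, h1, h2⟩
        · have : (a.1, a.2) ∈ F := haF
          rw [← heq] at this
          exact hqReach a.1 l' this hl'T
        · exact hqReach w l' (F_closed a haF w h1 l' h2) hl'T
      have hl'N : l' ∈ leaves AN := hleaf.symm ▸ hl'T
      exact ⟨hleavesNG hl'N, hql'⟩
    · rintro ⟨hl'G, hql'⟩
      have hl'T : l' ∈ leaves AT := hleaf ▸ hleavesGN hl'G
      obtain ⟨w, hwF⟩ := hLeafArcF l' hl'T hql'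
      exact ⟨hl'T, (w, l'), hwF, Relation.ReflTransGen.refl⟩
  -- part (c)
  · ext a
    obtain ⟨x, y⟩ := a
    constructor
    · intro ha
      rw [topArcs] at ha
      obtain ⟨haF, hmax⟩ := Finset.mem_filter.mp ha
      obtain ⟨haT, z, hz, hqz⟩ := Finset.mem_filter.mp haF
      obtain ⟨hlen, hchain⟩ := hphi.isPath _ haT
      obtain ⟨v0, g, hv0, hg⟩ := Stmt15Aux.exists_head?_getLast? (hpne _ haT)
      have hgz : g = z := by rw [hz] at hg; exact (Option.some.inj hg).symm
      have hPg : Reach AG q g := hgz ▸ hqz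
      have hnotP : ¬ Reach AG q v0 := by
        by_cases hx : x = rootT
        · rw [hx] at haT hv0
          have hout1 : outdeg AT rootT = 1 := by
            rcases hT.1.degree_cond rootT (Stmt15Aux.mem_nodes_fst hrootT) with h | h
            · rw [hrootTdeg] at h; exact absurd h (by norm_num)
            · exact h
          have hy : t0 = y := Stmt15Aux.unique_out_arc hout1.le hrootT haT
          have hv0r : v0 = rootN := by
            rw [← hy, horigin] at hv0
            exact (Option.some.inj hv0).symm
          rw [hv0r]
          exact hqNotAboveRoot
        · have hxN : x ∈ nodes AT := Stmt15Aux.mem_nodes_fst haT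
          have hind : indeg AT x ≠ 0 := by
            intro h0
            obtain ⟨r0, _, hru⟩ := hT.1.unique_root
            exact hx ((hru x ⟨hxN, h0⟩).trans
              (hru rootT ⟨Stmt15Aux.mem_nodes_fst hrootT, hrootTdeg⟩).symm)
          obtain ⟨w, hw⟩ := Stmt15Aux.indeg_ne_zero_arc hind
          intro hqv0
          have hcomp := hphi.comp w x y hw haT
          have hwF : (w, x) ∈ F := by
            refine Finset.mem_filter.mpr ⟨hw, v0, ?_, hqv0⟩
            rw [hcomp]; exact hv0
          have heq := hmax (w, x) hwF (Or.inr Relation.ReflTransGen.refl)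
          injection heq with h1 h2
          rw [h2] at haT
          rw [h1] at haT
          exact hATacyc w (Relation.TransGen.single haT)
      obtain ⟨e, he, hP1, hP2⟩ := Stmt15Aux.crossing hchain hv0 hg hnotP hPg
      refine Finset.mem_filter.mpr ⟨haT, e, he, ?_⟩
      have heN : (e.1, e.2) ∈ AN := Stmt15Aux.mem_pathArcs_rel hchain he
      have hreachE : Reach AN e.2 g := Stmt15Aux.pathArcs_reach_last hchain he hg
      have hAncE : Reach AG e.1 g :=
        reachNG _ _ (Relation.ReflTransGen.head heN hreachE)
      have hcmp := Stmt15Aux.tree_comparable hGdeg hAncE hPg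
      rcases hcmp with h | h
      · have hne1 : e.1 ≠ q := by
          rintro rfl
          exact hP1 Relation.ReflTransGen.refl
        have hS : SReach AG e.1 q := Stmt15Aux.transGen_of_ne h hne1
        rw [GW, Finset.mem_filter]
        exact ⟨heN, hS, hP2⟩
      · exact absurd h hP1
    · intro ha
      obtain ⟨haT, e, he, heGW⟩ := Finset.mem_filter.mp ha
      rw [GW, Finset.mem_filter] at heGW
      obtain ⟨heN, hSq, hqe2⟩ := heGW
      obtain ⟨hlen, hchain⟩ := hphi.isPath _ haT
      obtain ⟨v0, g, hv0, hg⟩ := Stmt15Aux.exists_head?_getLast? (hpne _ haT)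
      have haF : (x, y) ∈ F := by
        refine Finset.mem_filter.mpr ⟨haT, g, hg, ?_⟩
        exact hqe2.trans (reachNG _ _ (Stmt15Aux.pathArcs_reach_last hchain he hg))
      rw [topArcs]
      refine Finset.mem_filter.mpr ⟨haF, ?_⟩
      rintro b hbF (heq | hreach)
      · exact heq
      · exfalso
        obtain ⟨hbT, zb, hzb, hqzb⟩ := Finset.mem_filter.mp hbF
        have hbT' : (b.1, b.2) ∈ AT := hbT
        have hreachN : Reach AN zb v0 :=
          phi_reach x y haT v0 hv0 b.2 hreach b.1 zb hbT' hzb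
        have h1 : Reach AG q v0 := hqzb.trans (reachNG _ _ hreachN)
        have h2 : Reach AN v0 e.1 := Stmt15Aux.pathArcs_reach_head hchain he hv0
        have h3 : Reach AG q e.1 := h1.trans (reachNG _ _ h2)
        exact hGacyc q (Relation.TransGen.trans_right h3 hSq)
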